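/- Let T be a finite rooted tree where each node M covers a nonempty subset S(M) of a dataset of n points, the root covers all n points, each inner node's children partition its set, and each leaf M stores exactly C(M) = |S(M)| points. Define P(M) = |S(M)|/n, H(M) = -∑_{children i of M} (|S(i)|/|S(M)|) log₂(|S(i)|/|S(M)|) for inner nodes, and H(M) = log₂ C(M) for leaves. Then ∑_{M ∈ T} P(M)·H(M) = log₂ n. -/
import Mathlib


/-- An index tree: each node records the subset of the dataset it covers. -/
inductive ITree (α : Type) : Type where
  | leaf : Finset α → ITree α
  | node : Finset α → List (ITree α) → ITree α

namespace ITree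

/-- The set of data points covered by (the root of) a tree. -/
def cover {α : Type} : ITree α → Finset α
  | .leaf s => s
  | .node s _ => s

/-- Well-formedness: every node covers a nonempty set, the children of an inner
node cover pairwise disjoint sets whose union is the parent's set. -/
inductive WF {α : Type} [DecidableEq α] : ITree α → Prop where
  | leaf (s : Finset α) : s.Nonempty → WF (.leaf s)
  | node (s : Finset α) (cs : List (ITree α)) :
      s.Nonempty → cs ≠ [] →
      (∀ t ∈ cs, WF t) →
      (cs.map cover).Pairwise (fun a b => Disjoint a b) →
      (cs.map cover).foldr (· ∪ ·) ∅ = s →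
      WF (.node s cs)

/-- `wsum n t = ∑_{M ∈ t} P(M)·H(M)` where `P(M) = |S(M)|/n`,
`H` is the branch entropy for inner nodes and `log₂` of the capacity for leaves. -/
noncomputable def wsum {α : Type} (n : ℝ) : ITree α → ℝ
  | .leaf s => ((s.card : ℝ) / n) * Real.logb 2 (s.card)
  | .node s cs =>
      ((s.card : ℝ) / n) *
        (-(cs.map (fun t => ((cover t).card : ℝ) / s.card *
            Real.logb 2 (((cover t).card : ℝ) / s.card))).sum)
      + (cs.attach.map (fun x => wsum n x.1)).sum
  decreasing_by
    have := List.sizeOf_lt_of_mem x.2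
    simp at *
    omega

end ITree


section Helpers

variable {β : Type*}

lemma list_sum_mul (c : ℝ) (l : List β) (f : β → ℝ) :
    (l.map (fun t => c * f t)).sum = c * (l.map f).sum := by
  induction l with
  | nil => simp
  | cons a l ih => simp [ih, mul_add]

lemma list_sum_add (l : List β) (f g : β → ℝ) :
    (l.map (fun t => f t + g t)).sum = (l.map f).sum + (l.map g).sum := by
  induction l with
  | nil => simp
  | cons a l ih => simp [ih]; ring

lemma aux_pt (N n c lc lN : ℝ) (h : N ≠ 0) :
    -(N/n) * (c/N * (lc - lN)) + c/n*lc = lN/n * c := by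
  have hc : N/n * (c/N) = c/n := by
    rw [div_mul_div_comm, mul_comm N c, mul_div_mul_right _ _ h]
  calc -(N/n) * (c/N * (lc - lN)) + c/n*lc
      = -(N/n * (c/N)) * (lc - lN) + c/n*lc := by ring
    _ = -(c/n) * (lc - lN) + c/n*lc := by rw [hc]
    _ = lN/n * c := by ring

lemma list_sum_natcast (l : List β) (f : β → ℕ) :
    (l.map (fun t => (f t : ℝ))).sum = ((l.map f).sum : ℝ) := by
  induction l with
  | nil => simp
  | cons a l ih => simp [ih]

variable {α : Type} [DecidableEq α]

lemma disjoint_foldr (a : Finset α) (l : List (Finset α))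
    (h : ∀ b ∈ l, Disjoint a b) : Disjoint a (l.foldr (· ∪ ·) ∅) := by
  induction l with
  | nil => simp
  | cons b l ih =>
    simp only [List.foldr_cons, Finset.disjoint_union_right]
    exact ⟨h b (by simp), ih fun b hb => h b (by simp [hb])⟩

lemma card_foldr (l : List (Finset α)) (h : l.Pairwise (fun a b => Disjoint a b)) :
    (l.foldr (· ∪ ·) ∅).card = (l.map Finset.card).sum := by
  induction l with
  | nil => simp
  | cons a l ih =>
    rcases List.pairwise_cons.mp h with ⟨ha, hl⟩
    simp only [List.foldr_cons, List.map_cons, List.sum_cons]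
    rw [Finset.card_union_of_disjoint (disjoint_foldr a l ha), ih hl]

end Helpers

lemma cover_nonempty {α : Type} [DecidableEq α] {t : ITree α} (h : ITree.WF t) :
    (ITree.cover t).Nonempty := by
  cases h <;> assumption

lemma wsum_eq {α : Type} [DecidableEq α] (n : ℝ) {t : ITree α} (hwf : ITree.WF t) :
    ITree.wsum n t = ((ITree.cover t).card : ℝ) / n * Real.logb 2 ((ITree.cover t).card) := by
  induction hwf with
  | leaf s hs => rw [ITree.wsum]; rfl
  | node s cs hs hne hwf hdisj hun ih =>
    rw [ITree.wsum]
    have hNnat : 0 < s.card := Finset.card_pos.mpr hs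
    have hN : (0:ℝ) < (s.card : ℝ) := by exact_mod_cast hNnat
    have hpos : ∀ t ∈ cs, (0:ℝ) < ((ITree.cover t).card : ℝ) := by
      intro t ht
      exact_mod_cast Finset.card_pos.mpr (cover_nonempty (hwf t ht))
    -- rewrite child sums via IH
    have h1 : cs.attach.map (fun x => ITree.wsum n x.1)
        = cs.map (fun t => ((ITree.cover t).card : ℝ) / n * Real.logb 2 ((ITree.cover t).card)) := by
      calc cs.attach.map (fun x => ITree.wsum n x.1)
          = cs.attach.map (fun x => ((ITree.cover x.1).card : ℝ) / n * Real.logb 2 ((ITree.cover x.1).card)) :=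
            List.map_congr_left (fun x _ => ih x.1 x.2)
        _ = _ := by
            rw [show (fun (x : {t // t ∈ cs}) => ((ITree.cover x.1).card : ℝ) / n * Real.logb 2 ((ITree.cover x.1).card))
                = (fun t => ((ITree.cover t).card : ℝ) / n * Real.logb 2 ((ITree.cover t).card)) ∘ Subtype.val from rfl,
              ← List.map_map, List.attach_map_subtype_val]
    rw [h1]
    -- rewrite entropy term
    have h2 : cs.map (fun t => ((ITree.cover t).card : ℝ) / s.card *
          Real.logb 2 (((ITree.cover t).card : ℝ) / s.card))
        = cs.map (fun t => ((ITree.cover t).card : ℝ) / s.card *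
          (Real.logb 2 ((ITree.cover t).card) - Real.logb 2 (s.card))) := by
      refine List.map_congr_left fun t ht => ?_
      rw [Real.logb_div (ne_of_gt (hpos t ht)) (ne_of_gt hN)]
    rw [h2]
    -- sum of child cardinalities
    have hsum : (cs.map (fun t => ((ITree.cover t).card : ℝ))).sum = (s.card : ℝ) := by
      rw [list_sum_natcast]
      have := card_foldr (cs.map ITree.cover) hdisj
      rw [hun, List.map_map] at this
      exact_mod_cast this.symm
    -- combine
    have h3 : ((s.card : ℝ) / n) *
        (-(cs.map (fun t => ((ITree.cover t).card : ℝ) / s.card *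
          (Real.logb 2 ((ITree.cover t).card) - Real.logb 2 (s.card)))).sum)
        = (cs.map (fun t => (-(((s.card : ℝ)) / n)) * (((ITree.cover t).card : ℝ) / s.card *
          (Real.logb 2 ((ITree.cover t).card) - Real.logb 2 (s.card))))).sum := by
      rw [list_sum_mul]; ring
    rw [h3, ← list_sum_add]
    have h4 : cs.map (fun t => (-(((s.card : ℝ)) / n)) * (((ITree.cover t).card : ℝ) / s.card *
          (Real.logb 2 ((ITree.cover t).card) - Real.logb 2 (s.card)))
          + ((ITree.cover t).card : ℝ) / n * Real.logb 2 ((ITree.cover t).card))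
        = cs.map (fun t => (Real.logb 2 (s.card) / n) * ((ITree.cover t).card : ℝ)) := by
      refine List.map_congr_left fun t ht => ?_
      exact aux_pt _ _ _ _ _ (ne_of_gt hN)
    rw [h4, list_sum_mul, hsum]
    simp [ITree.cover]
    ring

/-- entropy conservation: for a well-formed index tree over `n`
data points, the access-probability-weighted sum of node entropies equals `log₂ n`. -/
theorem weighted_entropy_sum {α : Type} [DecidableEq α] (t : ITree α) (n : ℕ)
    (hwf : ITree.WF t) (hcard : (ITree.cover t).card = n) :
    ITree.wsum (n : ℝ) t = Real.logb 2 n := by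
  have hn : (0:ℝ) < (n : ℝ) := by
    have := Finset.card_pos.mpr (cover_nonempty hwf)
    rw [hcard] at this
    exact_mod_cast this
  rw [wsum_eq (n : ℝ) hwf, hcard, div_self (ne_of_gt hn), one_mul]
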